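/- There exist constants c₂ > c₁ > 0 such that for all r ≥ 2, the integral J_r = ∫ 2r²/(sin(ψ/r))² dψ, taken over the set {ψ ∈ (1, 2πr) : |sin(ψ/r)| > 1/r}, satisfies c₁·r⁴ ≤ J_r ≤ c₂·r⁴. -/

import Mathlib

open MeasureTheory Real

/-- FTC computation of the integral of `2 r² / sin(ψ/r)²`. -/
lemma ftc_aux (r a b : ℝ) (hr : 0 < r) (hab : a ≤ b)
    (h : ∀ x ∈ Set.Icc a b, Real.sin (x / r) ≠ 0) :
    ∫ x in a..b, 2 * r ^ 2 / Real.sin (x / r) ^ 2 =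
      (-(2 * r ^ 3) * (Real.cos (b / r) / Real.sin (b / r))) -
      (-(2 * r ^ 3) * (Real.cos (a / r) / Real.sin (a / r))) := by
  have huicc : Set.uIcc a b = Set.Icc a b := Set.uIcc_of_le hab
  apply intervalIntegral.integral_eq_sub_of_hasDerivAt
  · intro x hx
    rw [huicc] at hx
    have hsx : Real.sin (x / r) ≠ 0 := h x hx
    have hdiv : HasDerivAt (fun y : ℝ => y / r) (1 / r) x := by
      simpa using (hasDerivAt_id x).div_const r
    have hcos : HasDerivAt (fun y : ℝ => Real.cos (y / r))
        (-Real.sin (x / r) * (1 / r)) x := by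
        have := (Real.hasDerivAt_cos (x / r)).comp x hdiv; exact this
    have hsin : HasDerivAt (fun y : ℝ => Real.sin (y / r))
        (Real.cos (x / r) * (1 / r)) x := by
        have := (Real.hasDerivAt_sin (x / r)).comp x hdiv; exact this
    have hq := (hcos.div hsin hsx).const_mul (-(2 * r ^ 3))
    refine hq.congr_deriv ?_
    have h2 : -Real.sin (x / r) * (1 / r) * Real.sin (x / r) -
        Real.cos (x / r) * (Real.cos (x / r) * (1 / r)) = -(1 / r) := by
      linear_combination (-(1 / r)) * Real.sin_sq_add_cos_sq (x / r)
    rw [h2]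
    field_simp
  · apply ContinuousOn.intervalIntegrable
    apply ContinuousOn.div continuousOn_const
    · exact (Real.continuous_sin.comp (continuous_id.div_const r)).continuousOn.pow 2
    · intro x hx
      rw [huicc] at hx
      exact pow_ne_zero 2 (h x hx)

set_option maxHeartbeats 2000000 in
theorem J_r_two_sided : ∃ c₁ c₂ : ℝ, 0 < c₁ ∧ c₁ < c₂ ∧
    ∀ r : ℝ, 2 ≤ r →
      c₁ * r ^ 4 ≤
        (∫ ψ in {ψ : ℝ | ψ ∈ Set.Ioo 1 (2 * Real.pi * r) ∧ |Real.sin (ψ / r)| > 1 / r},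
          2 * r ^ 2 / Real.sin (ψ / r) ^ 2) ∧
      (∫ ψ in {ψ : ℝ | ψ ∈ Set.Ioo 1 (2 * Real.pi * r) ∧ |Real.sin (ψ / r)| > 1 / r},
          2 * r ^ 2 / Real.sin (ψ / r) ^ 2) ≤ c₂ * r ^ 4 := by
  refine ⟨1/9, 13, by norm_num, by norm_num, ?_⟩
  intro r hr
  have hr0 : (0:ℝ) < r := by linarith
  have hπ : (3.141592 : ℝ) < π := Real.pi_gt_d6
  have hπ' : π < 3.15 := Real.pi_lt_d2
  set S : Set ℝ := {ψ : ℝ | ψ ∈ Set.Ioo 1 (2 * π * r) ∧ |Real.sin (ψ / r)| > 1 / r} with hS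
  set f : ℝ → ℝ := fun ψ => 2 * r ^ 2 / Real.sin (ψ / r) ^ 2 with hf
  have hf_nonneg : ∀ ψ, 0 ≤ f ψ := fun ψ => by positivity
  -- basic bounds
  have h1r : 1 / r ≤ π / 2 := by
    rw [div_le_div_iff₀ hr0 (by norm_num)]; nlinarith
  have hsin1r_pos : 0 < Real.sin (1 / r) :=
    Real.sin_pos_of_pos_of_lt_pi (by positivity) (by nlinarith)
  have hsin1r : 2 / (π * r) ≤ Real.sin (1 / r) := by
    have := Real.mul_le_sin (x := 1 / r) (by positivity) h1r
    calc 2 / (π * r) = 2 / π * (1 / r) := by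
          rw [div_mul_div_comm]; norm_num
      _ ≤ Real.sin (1 / r) := this
  -- the two intervals
  have hend1 : (1:ℝ) ≤ π * r - 1 := by nlinarith
  have hend2 : π * r + 1 ≤ 2 * π * r - 1 := by nlinarith
  set I₁ : Set ℝ := Set.Icc 1 (π * r - 1) with hI₁
  set I₂ : Set ℝ := Set.Icc (π * r + 1) (2 * π * r - 1) with hI₂
  have hsin_ne₁ : ∀ x ∈ I₁, Real.sin (x / r) ≠ 0 := by
    intro x hx
    have h1 : 0 < x / r := by
      have := hx.1; positivity
    have h2 : x / r < π := by
      have := hx.2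
      rw [div_lt_iff₀ hr0]; nlinarith
    exact ne_of_gt (Real.sin_pos_of_pos_of_lt_pi h1 h2)
  have hsin_ne₂ : ∀ x ∈ I₂, Real.sin (x / r) ≠ 0 := by
    intro x hx
    have h1 : π < x / r := by
      rw [lt_div_iff₀ hr0]; nlinarith [hx.1]
    have h2 : x / r < 2 * π := by
      rw [div_lt_iff₀ hr0]; nlinarith [hx.2]
    have : 0 < Real.sin (2 * π - x / r) := by
      apply Real.sin_pos_of_pos_of_lt_pi <;> linarith
    rw [Real.sin_two_pi_sub] at this
    linarith
  -- integrability on I₁ ∪ I₂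
  have hcontOn : ∀ (a b : ℝ), (∀ x ∈ Set.Icc a b, Real.sin (x / r) ≠ 0) →
      IntegrableOn f (Set.Icc a b) volume := by
    intro a b hne
    apply ContinuousOn.integrableOn_Icc
    apply ContinuousOn.div continuousOn_const
    · exact (Real.continuous_sin.comp (continuous_id.div_const r)).continuousOn.pow 2
    · exact fun x hx => pow_ne_zero 2 (hne x hx)
  have hint₁ : IntegrableOn f I₁ volume := hcontOn _ _ hsin_ne₁
  have hint₂ : IntegrableOn f I₂ volume := hcontOn _ _ hsin_ne₂
  have hintI : IntegrableOn f (I₁ ∪ I₂) volume := hint₁.union hint₂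
  -- S ⊆ I₁ ∪ I₂
  have hSsub : S ⊆ I₁ ∪ I₂ := by
    intro ψ hψ
    obtain ⟨⟨hψ1, hψ2⟩, hψ3⟩ := hψ
    by_cases hcase : ψ ≤ π * r - 1
    · exact Or.inl ⟨le_of_lt hψ1, hcase⟩
    · push_neg at hcase
      right
      constructor
      · by_contra hlt
        push_neg at hlt
        have e1 : (π * r - 1) / r = π - 1 / r := by field_simp
        have e2 : (π * r + 1) / r = π + 1 / r := by field_simp
        have l1 : π - 1 / r < ψ / r := by rw [← e1]; gcongr
        have l2 : ψ / r < π + 1 / r := by rw [← e2]; gcongr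
        have habs : |π - ψ / r| < 1 / r := abs_lt.mpr ⟨by linarith, by linarith⟩
        have : |Real.sin (ψ / r)| < 1 / r := by
          calc |Real.sin (ψ / r)| = |Real.sin (π - ψ / r)| := by
                rw [Real.sin_pi_sub]
            _ ≤ |π - ψ / r| := Real.abs_sin_le_abs
            _ < 1 / r := habs
        linarith [hψ3]
      · by_contra hlt
        push_neg at hlt
        have e1 : (2 * π * r - 1) / r = 2 * π - 1 / r := by field_simp
        have l1 : 2 * π - 1 / r < ψ / r := by rw [← e1]; gcongr
        have l2 : ψ / r < 2 * π := by rw [div_lt_iff₀ hr0]; nlinarith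
        have habs : |2 * π - ψ / r| < 1 / r := by
          rw [abs_lt]
          constructor
          · have : 0 < 1 / r := by positivity
            linarith
          · linarith
        have : |Real.sin (ψ / r)| < 1 / r := by
          calc |Real.sin (ψ / r)| = |Real.sin (2 * π - ψ / r)| := by
                rw [Real.sin_two_pi_sub, abs_neg]
            _ ≤ |2 * π - ψ / r| := Real.abs_sin_le_abs
            _ < 1 / r := habs
        linarith [hψ3]
  have hintS : IntegrableOn f S volume := hintI.mono_set hSsub
  -- ================== Lower bound ==================
  have hTsub : Set.Ioo (2:ℝ) 3 ⊆ S := by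
    intro ψ hψ
    obtain ⟨h2ψ, hψ3⟩ := hψ
    refine ⟨⟨by linarith, by nlinarith⟩, ?_⟩
    have hu1 : 2 / r ≤ ψ / r := by gcongr
    have hu2 : ψ / r ≤ π / 2 := by
      rw [div_le_div_iff₀ hr0 (by norm_num : (0:ℝ) < 2)]; nlinarith
    have := Real.mul_le_sin (x := ψ / r) (by positivity) hu2
    have hsinpos : 0 < Real.sin (ψ / r) :=
      Real.sin_pos_of_pos_of_lt_pi (by positivity) (by nlinarith)
    rw [abs_of_pos hsinpos]
    calc 1 / r < 4 / (π * r) := by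
          rw [div_lt_div_iff₀ hr0 (by positivity)]; nlinarith
      _ = 2 / π * (2 / r) := by rw [div_mul_div_comm]; norm_num
      _ ≤ 2 / π * (ψ / r) := by
          apply mul_le_mul_of_nonneg_left hu1 (by positivity)
      _ ≤ Real.sin (ψ / r) := this
  have hlow : 2 * r ^ 4 / 9 * (volume (Set.Ioo (2:ℝ) 3)).toReal ≤
      ∫ ψ in Set.Ioo (2:ℝ) 3, f ψ := by
    apply setIntegral_ge_of_const_le_real measurableSet_Ioo
    · rw [Real.volume_Ioo]; exact ENNReal.ofReal_ne_top
    · intro x hx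
      have hsinpos : 0 < Real.sin (x / r) :=
        Real.sin_pos_of_pos_of_lt_pi (by have := hx.1; positivity)
          (by rw [div_lt_iff₀ hr0]; nlinarith [hx.2])
      have hxle : Real.sin (x / r) < 3 / r := by
        calc Real.sin (x / r) < x / r := Real.sin_lt (by have := hx.1; positivity)
          _ < 3 / r := by gcongr; exact hx.2
      have hsq : Real.sin (x / r) ^ 2 ≤ 9 / r ^ 2 := by
        rw [show (9:ℝ) / r ^ 2 = (3 / r) ^ 2 by rw [div_pow]; norm_num]
        nlinarith
      have hsq0 : 0 < Real.sin (x / r) ^ 2 := by positivity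
      have : 2 * r ^ 2 / (9 / r ^ 2) ≤ 2 * r ^ 2 / Real.sin (x / r) ^ 2 :=
        div_le_div_of_nonneg_left (by positivity) hsq0 hsq
      calc 2 * r ^ 4 / 9 = 2 * r ^ 2 / (9 / r ^ 2) := by
            rw [div_div_eq_mul_div]; ring_nf
        _ ≤ f x := this
    · exact hintS.mono_set hTsub
  have hmono : ∫ ψ in Set.Ioo (2:ℝ) 3, f ψ ≤ ∫ ψ in S, f ψ := by
    apply setIntegral_mono_set hintS
    · exact Filter.Eventually.of_forall fun x => hf_nonneg x
    · exact Filter.Eventually.of_forall hTsub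
  have hvol : (volume (Set.Ioo (2:ℝ) 3)).toReal = 1 := by
    rw [Real.volume_Ioo]; norm_num
  -- ================== Upper bound ==================
  -- compute endpoints
  have hep1 : (1:ℝ) / r = 1 / r := rfl
  have hval₁ : ∫ x in (1:ℝ)..(π * r - 1), f x =
      4 * r ^ 3 * (Real.cos (1 / r) / Real.sin (1 / r)) := by
    rw [hf]
    rw [ftc_aux r 1 (π * r - 1) hr0 hend1 hsin_ne₁]
    have he : (π * r - 1) / r = π - 1 / r := by field_simp
    rw [he, Real.cos_pi_sub, Real.sin_pi_sub, neg_div]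
    ring
  have hval₂ : ∫ x in (π * r + 1)..(2 * π * r - 1), f x =
      4 * r ^ 3 * (Real.cos (1 / r) / Real.sin (1 / r)) := by
    rw [hf]
    rw [ftc_aux r (π * r + 1) (2 * π * r - 1) hr0 hend2 hsin_ne₂]
    have he1 : (π * r + 1) / r = 1 / r + π := by field_simp; ring
    have he2 : (2 * π * r - 1) / r = 2 * π - 1 / r := by field_simp
    rw [he1, he2, Real.cos_add_pi, Real.sin_add_pi, Real.cos_two_pi_sub, Real.sin_two_pi_sub]
    simp only [div_neg, neg_div, neg_neg]
    ring
  have hcotbound : Real.cos (1 / r) / Real.sin (1 / r) ≤ π * r / 2 := by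
    have hc : Real.cos (1 / r) ≤ 1 := Real.cos_le_one _
    have h2 : 2 / (π * r) > 0 := by positivity
    calc Real.cos (1 / r) / Real.sin (1 / r) ≤ 1 / Real.sin (1 / r) := by
          gcongr
      _ ≤ 1 / (2 / (π * r)) := one_div_le_one_div_of_le h2 hsin1r
      _ = π * r / 2 := by rw [one_div_div]
  -- set integral over I₁ ∪ I₂
  have hmeasS : MeasurableSet S := by
    have : S = Set.Ioo 1 (2 * π * r) ∩ {ψ : ℝ | 1 / r < |Real.sin (ψ / r)|} := by
      ext x; simp [hS, and_comm]
    rw [this]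
    exact measurableSet_Ioo.inter
      (measurableSet_lt measurable_const
        ((Real.continuous_sin.comp (continuous_id.div_const r)).abs.measurable))
  have hup : ∫ ψ in S, f ψ ≤ ∫ ψ in I₁ ∪ I₂, f ψ := by
    apply setIntegral_mono_set hintI
    · exact Filter.Eventually.of_forall fun x => hf_nonneg x
    · exact Filter.Eventually.of_forall hSsub
  have hdisj : Disjoint I₁ I₂ := by
    rw [Set.disjoint_left]
    intro x hx₁ hx₂
    have := hx₁.2
    have := hx₂.1
    linarith
  have hsplit : ∫ ψ in I₁ ∪ I₂, f ψ = (∫ ψ in I₁, f ψ) + ∫ ψ in I₂, f ψ :=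
    setIntegral_union hdisj measurableSet_Icc hint₁ hint₂
  have hIcc₁ : ∫ ψ in I₁, f ψ = ∫ x in (1:ℝ)..(π * r - 1), f x := by
    rw [hI₁, MeasureTheory.integral_Icc_eq_integral_Ioc,
      ← intervalIntegral.integral_of_le hend1]
  have hIcc₂ : ∫ ψ in I₂, f ψ = ∫ x in (π * r + 1)..(2 * π * r - 1), f x := by
    rw [hI₂, MeasureTheory.integral_Icc_eq_integral_Ioc,
      ← intervalIntegral.integral_of_le hend2]
  constructor
  · -- lower bound
    calc (1/9 : ℝ) * r ^ 4 ≤ 2 * r ^ 4 / 9 * 1 := by nlinarith [pow_pos hr0 4]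
      _ = 2 * r ^ 4 / 9 * (volume (Set.Ioo (2:ℝ) 3)).toReal := by rw [hvol]
      _ ≤ ∫ ψ in Set.Ioo (2:ℝ) 3, f ψ := hlow
      _ ≤ ∫ ψ in S, f ψ := hmono
  · -- upper bound
    calc ∫ ψ in S, f ψ ≤ ∫ ψ in I₁ ∪ I₂, f ψ := hup
      _ = (∫ ψ in I₁, f ψ) + ∫ ψ in I₂, f ψ := hsplit
      _ = 8 * r ^ 3 * (Real.cos (1 / r) / Real.sin (1 / r)) := by
          rw [hIcc₁, hIcc₂, hval₁, hval₂]; ring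
      _ ≤ 8 * r ^ 3 * (π * r / 2) := by
          apply mul_le_mul_of_nonneg_left hcotbound (by positivity)
      _ ≤ 13 * r ^ 4 := by nlinarith [pow_pos hr0 3, pow_pos hr0 4]
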